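/- In an ARIF loop, (xⁱ·yᵐ)·(yⁿ·xʲ) = xⁱ·(y^{m+n}·xʲ) for all x, y and all integers i, j, m, n (where xⁱ·y^{m+n}·xʲ is unambiguous by flexibility and power alternativity). -/

import Mathlib

/-- A loop: a magma with two-sided identity and left/right division. -/
class Loop (M : Type*) extends Mul M, One M where
  ld : M → M → M
  rd : M → M → M
  mul_ld : ∀ x y : M, x * ld x y = y
  ld_mul : ∀ x y : M, ld x (x * y) = y
  rd_mul : ∀ x y : M, rd y x * x = y
  mul_rd : ∀ x y : M, rd (y * x) x = y
  one_mul : ∀ x : M, 1 * x = x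
  mul_one : ∀ x : M, x * 1 = x

/-- An inverse property (IP) loop. -/
class IPLoop (M : Type*) extends Loop M, Inv M where
  inv_mul_cancel_left : ∀ x y : M, x⁻¹ * (x * y) = y
  mul_inv_cancel_right : ∀ x y : M, (y * x) * x⁻¹ = y

/-- Left translation `L(x) : y ↦ x * y` as a permutation. -/
def Loop.Lperm {M : Type*} [Loop M] (x : M) : Equiv.Perm M :=
  ⟨fun y => x * y, fun y => Loop.ld x y, Loop.ld_mul x, Loop.mul_ld x⟩

/-- Right translation `R(x) : y ↦ y * x` as a permutation. -/
def Loop.Rperm {M : Type*} [Loop M] (x : M) : Equiv.Perm M :=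
  ⟨fun y => y * x, fun y => Loop.rd y x, fun y => Loop.mul_rd x y, fun y => Loop.rd_mul x y⟩

/-- Integer powers: `xⁿ = 1 · L(x)ⁿ`. -/
def Loop.pow {M : Type*} [Loop M] (x : M) (n : ℤ) : M := (Loop.Lperm x ^ n) 1

namespace Arif
open Loop

section basic
variable {M : Type*} [Loop M]

@[simp] lemma Lperm_apply (x z : M) : Lperm x z = x * z := rfl
@[simp] lemma Rperm_apply (x z : M) : Rperm x z = z * x := rfl

lemma mul_left_cancel' {x a b : M} (h : x * a = x * b) : a = b := by
  have := congrArg (Loop.ld x) h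
  simpa [Loop.ld_mul] using this

lemma mul_right_cancel' {x a b : M} (h : a * x = b * x) : a = b := by
  have := congrArg (fun t => Loop.rd t x) h
  simpa [Loop.mul_rd] using this

@[simp] lemma one_mul' (x : M) : 1 * x = x := Loop.one_mul x
@[simp] lemma mul_one' (x : M) : x * 1 = x := Loop.mul_one x

end basic

section ip
variable {M : Type*} [IPLoop M]

lemma inv_mul_self (x : M) : x⁻¹ * x = 1 := by
  have := IPLoop.inv_mul_cancel_left x (1 : M); simpa using this

lemma mul_inv_self (x : M) : x * x⁻¹ = 1 := by
  have := IPLoop.mul_inv_cancel_right x (1 : M); simpa using this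

@[simp] lemma inv_inv' (x : M) : x⁻¹⁻¹ = x := by
  have h := IPLoop.inv_mul_cancel_left x⁻¹ x
  rw [inv_mul_self, mul_one'] at h
  exact h

lemma mul_inv_cancel_left' (x y : M) : x * (x⁻¹ * y) = y := by
  have := IPLoop.inv_mul_cancel_left x⁻¹ y
  rwa [inv_inv'] at this

lemma inv_mul_cancel_right' (y x : M) : (y * x⁻¹) * x = y := by
  have := IPLoop.mul_inv_cancel_right x⁻¹ y
  rwa [inv_inv'] at this

lemma Lperm_inv (x : M) : Lperm (x⁻¹ : M) = (Lperm x)⁻¹ := by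
  apply eq_inv_of_mul_eq_one_left
  ext z
  show x⁻¹ * (x * z) = z
  exact IPLoop.inv_mul_cancel_left x z

lemma Rperm_inv (x : M) : Rperm (x⁻¹ : M) = (Rperm x)⁻¹ := by
  apply eq_inv_of_mul_eq_one_left
  ext z
  show (z * x) * x⁻¹ = z
  exact IPLoop.mul_inv_cancel_right x z

end ip

section pow
variable {M : Type*} [IPLoop M]

lemma pow_zero' (x : M) : pow x 0 = 1 := by simp [Loop.pow]

lemma pow_one' (x : M) : pow x 1 = x := by simp [Loop.pow]

lemma FL (x : M) (a n : ℤ) : (Lperm x ^ a) (pow x n) = pow x (a + n) := by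
  rw [Loop.pow, Loop.pow, ← Equiv.Perm.mul_apply, ← zpow_add]

lemma mul_pow' (x : M) (n : ℤ) : x * pow x n = pow x (1 + n) := by
  have := FL x 1 n; simpa using this

lemma inv_mul_pow (x : M) (n : ℤ) : x⁻¹ * pow x n = pow x (-1 + n) := by
  have := FL x (-1) n
  rw [zpow_neg_one, ← Lperm_inv] at this
  simpa using this

lemma pow_neg' (x : M) (n : ℤ) : pow x (-n) = pow x⁻¹ n := by
  rw [Loop.pow, Loop.pow, zpow_neg, ← inv_zpow, ← Lperm_inv]

lemma pow_inv (y : M) (k : ℤ) : pow y⁻¹ k = pow y (-k) := (pow_neg' y k).symm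

variable (hflex : ∀ x y : M, x * (y * x) = (x * y) * x)
include hflex

lemma pow_mul_self (x : M) (n : ℤ) : pow x n * x = pow x (n + 1) := by
  induction n using Int.induction_on with
  | zero => simp [pow_zero', pow_one']
  | succ n ih =>
      have h1 : pow x ((n : ℤ) + 1) = x * pow x n := by
        rw [mul_pow', add_comm]
      rw [h1, ← hflex x (pow x n), ih, mul_pow']
      congr 1 <;> ring
  | pred n ih =>
      apply mul_left_cancel' (x := x)
      rw [hflex x (pow x (-(n : ℤ) - 1)), mul_pow', mul_pow']
      have e1 : (1 : ℤ) + (-(n : ℤ) - 1) = -n := by ring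
      rw [e1, ih]
      congr 1 <;> ring

lemma pow_mul_inv (x : M) (n : ℤ) : pow x n * x⁻¹ = pow x (n - 1) := by
  have h := IPLoop.mul_inv_cancel_right x (pow x (n - 1))
  rw [pow_mul_self hflex x (n - 1)] at h
  simpa using h

lemma FR (x : M) (n b : ℤ) : (Rperm x ^ b) (pow x n) = pow x (n + b) := by
  induction b using Int.induction_on with
  | zero => simp
  | succ b ih =>
      have : (b : ℤ) + 1 = 1 + b := by ring
      rw [this, zpow_add, zpow_one, Equiv.Perm.mul_apply, ih]
      rw [show (Rperm x) (pow x (n + b)) = pow x (n + b) * x from rfl,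
        pow_mul_self hflex]
      congr 1 <;> ring
  | pred b ih =>
      have : -(b : ℤ) - 1 = -1 + -b := by ring
      rw [this, zpow_add, Equiv.Perm.mul_apply, ih]
      rw [zpow_neg_one, ← Rperm_inv]
      rw [show (Rperm x⁻¹) (pow x (n + -b)) = pow x (n + -b) * x⁻¹ from rfl,
        pow_mul_inv hflex]
      congr 1 <;> ring

end pow

section palt
variable {M : Type*} [IPLoop M]
variable (hflex : ∀ x y : M, x * (y * x) = (x * y) * x)
variable (hW1 : ∀ x y z : M, (z * x) * (y * (x * y)) = (z * (x * (y * x))) * y)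
variable (hW2 : ∀ x y z : M, (y * (x * y)) * (x * z) = y * ((x * (y * x)) * z))

lemma LAP (hW2 : ∀ x y z : M, (y * (x * y)) * (x * z) = y * ((x * (y * x)) * z))
    (x z : M) : x * (x * z) = (x * x) * z := by
  have := hW2 x 1 z; simpa using this

lemma RAP (hW1 : ∀ x y z : M, (z * x) * (y * (x * y)) = (z * (x * (y * x))) * y)
    (x z : M) : (z * x) * x = z * (x * x) := by
  have := hW1 x 1 z; simpa using this

lemma pow_two' (x : M) : pow x 2 = x * x := by
  have := mul_pow' x 1
  rw [pow_one'] at this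
  exact this.symm

section step
variable {x : M} {k : ℤ}

include hflex hW1 in
lemma Rodd (hLk : Lperm (pow x k) = (Lperm x)^k)
    (hRk : Rperm (pow x k) = (Rperm x)^k)
    (hRk2 : Rperm (pow x (k-2)) = (Rperm x)^(k-2)) :
    Rperm (pow x (2*k-1)) = (Rperm x)^(2*k-1) := by
  have e1 : x⁻¹ * pow x k = pow x (k-1) := by
    rw [inv_mul_pow]; congr 1 <;> ring
  have e2 : pow x k * pow x (k-1) = pow x (2*k-1) := by
    have : Lperm (pow x k) (pow x (k-1)) = pow x k * pow x (k-1) := rfl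
    rw [← this, hLk, FL]; congr 1 <;> ring
  have e3 : pow x k * x⁻¹ = pow x (k-1) := by
    rw [pow_mul_inv hflex]
  have e4 : x⁻¹ * pow x (k-1) = pow x (k-2) := by
    rw [inv_mul_pow]; congr 1 <;> ring
  have key : ∀ z : M, (z * x⁻¹) * pow x (2*k-1) = (z * pow x (k-2)) * pow x k := by
    intro z
    have h := hW1 x⁻¹ (pow x k) z
    rw [e1, e2, e3, e4] at h
    exact h
  have hperm : Rperm (pow x (2*k-1)) * Rperm (x⁻¹ : M) =
      Rperm (pow x k) * Rperm (pow x (k-2)) := by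
    ext z
    simpa using key z
  have := eq_mul_inv_of_mul_eq hperm
  rw [this, hRk, hRk2, Rperm_inv]
  group

include hflex hW2 in
lemma Lodd (hLk : Lperm (pow x k) = (Lperm x)^k)
    (hLk2 : Lperm (pow x (k-2)) = (Lperm x)^(k-2)) :
    Lperm (pow x (2*k-1)) = (Lperm x)^(2*k-1) := by
  have e1 : x⁻¹ * pow x k = pow x (k-1) := by
    rw [inv_mul_pow]; congr 1 <;> ring
  have e2 : pow x k * pow x (k-1) = pow x (2*k-1) := by
    have : Lperm (pow x k) (pow x (k-1)) = pow x k * pow x (k-1) := rfl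
    rw [← this, hLk, FL]; congr 1 <;> ring
  have e3 : pow x k * x⁻¹ = pow x (k-1) := by
    rw [pow_mul_inv hflex]
  have e4 : x⁻¹ * pow x (k-1) = pow x (k-2) := by
    rw [inv_mul_pow]; congr 1 <;> ring
  have key : ∀ z : M, pow x (2*k-1) * (x⁻¹ * z) = pow x k * (pow x (k-2) * z) := by
    intro z
    have h := hW2 x⁻¹ (pow x k) z
    rw [e1, e2, e3, e4] at h
    exact h
  have hperm : Lperm (pow x (2*k-1)) * Lperm (x⁻¹ : M) =
      Lperm (pow x k) * Lperm (pow x (k-2)) := by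
    ext z
    simpa using key z
  have := eq_mul_inv_of_mul_eq hperm
  rw [this, hLk, hLk2, Lperm_inv]
  group

include hflex hW1 in
lemma Reven (hLk : Lperm (pow x k) = (Lperm x)^k)
    (hRk : Rperm (pow x k) = (Rperm x)^k)
    (hLm2 : Lperm (pow x (-2)) = (Lperm x)^(-2 : ℤ))
    (hRm2 : Rperm (pow x (-2)) = (Rperm x)^(-2 : ℤ))
    (hRk4 : Rperm (pow x (k-4)) = (Rperm x)^(k-4)) :
    Rperm (pow x (2*k-2)) = (Rperm x)^(2*k-2) := by
  have e1 : pow x (-2) * pow x k = pow x (k-2) := by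
    have : Lperm (pow x (-2)) (pow x k) = pow x (-2) * pow x k := rfl
    rw [← this, hLm2, FL]; congr 1 <;> ring
  have e2 : pow x k * pow x (k-2) = pow x (2*k-2) := by
    have : Lperm (pow x k) (pow x (k-2)) = pow x k * pow x (k-2) := rfl
    rw [← this, hLk, FL]; congr 1 <;> ring
  have e3 : pow x k * pow x (-2) = pow x (k-2) := by
    have : Rperm (pow x (-2)) (pow x k) = pow x k * pow x (-2) := rfl
    rw [← this, hRm2, FR hflex]; congr 1
  have e4 : pow x (-2) * pow x (k-2) = pow x (k-4) := by
    have : Lperm (pow x (-2)) (pow x (k-2)) = pow x (-2) * pow x (k-2) := rfl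
    rw [← this, hLm2, FL]; congr 1 <;> ring
  have key : ∀ z : M, (z * pow x (-2)) * pow x (2*k-2) = (z * pow x (k-4)) * pow x k := by
    intro z
    have h := hW1 (pow x (-2)) (pow x k) z
    rw [e1, e2, e3, e4] at h
    exact h
  have hperm : Rperm (pow x (2*k-2)) * Rperm (pow x (-2)) =
      Rperm (pow x k) * Rperm (pow x (k-4)) := by
    ext z
    simpa using key z
  have := eq_mul_inv_of_mul_eq hperm
  rw [this, hRk, hRk4, hRm2]
  group

include hflex hW2 in
lemma Leven (hLk : Lperm (pow x k) = (Lperm x)^k)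
    (hLm2 : Lperm (pow x (-2)) = (Lperm x)^(-2 : ℤ))
    (hRm2 : Rperm (pow x (-2)) = (Rperm x)^(-2 : ℤ))
    (hLk4 : Lperm (pow x (k-4)) = (Lperm x)^(k-4)) :
    Lperm (pow x (2*k-2)) = (Lperm x)^(2*k-2) := by
  have e1 : pow x (-2) * pow x k = pow x (k-2) := by
    have : Lperm (pow x (-2)) (pow x k) = pow x (-2) * pow x k := rfl
    rw [← this, hLm2, FL]; congr 1 <;> ring
  have e2 : pow x k * pow x (k-2) = pow x (2*k-2) := by
    have : Lperm (pow x k) (pow x (k-2)) = pow x k * pow x (k-2) := rfl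
    rw [← this, hLk, FL]; congr 1 <;> ring
  have e3 : pow x k * pow x (-2) = pow x (k-2) := by
    have : Rperm (pow x (-2)) (pow x k) = pow x k * pow x (-2) := rfl
    rw [← this, hRm2, FR hflex]; congr 1
  have e4 : pow x (-2) * pow x (k-2) = pow x (k-4) := by
    have : Lperm (pow x (-2)) (pow x (k-2)) = pow x (-2) * pow x (k-2) := rfl
    rw [← this, hLm2, FL]; congr 1 <;> ring
  have key : ∀ z : M, pow x (2*k-2) * (pow x (-2) * z) = pow x k * (pow x (k-4) * z) := by
    intro z
    have h := hW2 (pow x (-2)) (pow x k) z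
    rw [e1, e2, e3, e4] at h
    exact h
  have hperm : Lperm (pow x (2*k-2)) * Lperm (pow x (-2)) =
      Lperm (pow x k) * Lperm (pow x (k-4)) := by
    ext z
    simpa using key z
  have := eq_mul_inv_of_mul_eq hperm
  rw [this, hLk, hLk4, hLm2]
  group

end step

lemma Lperm_one : Lperm (1 : M) = 1 := by
  ext z; simpa using one_mul' z

lemma Rperm_one : Rperm (1 : M) = 1 := by
  ext z; simpa using mul_one' z

include hflex hW1 hW2 in
lemma palt : ∀ n : ℕ, ∀ x : M,
    Lperm (pow x (n : ℤ)) = (Lperm x)^(n : ℤ) ∧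
    Rperm (pow x (n : ℤ)) = (Rperm x)^(n : ℤ) := by
  intro n
  induction n using Nat.strong_induction_on with
  | _ n IH =>
  intro x
  match n with
  | 0 => rw [show ((0:ℕ):ℤ) = 0 from rfl, pow_zero', Lperm_one, Rperm_one,
      zpow_zero, zpow_zero]; exact ⟨rfl, rfl⟩
  | 1 => rw [show ((1:ℕ):ℤ) = 1 from rfl, pow_one', zpow_one, zpow_one]
         exact ⟨rfl, rfl⟩
  | 2 =>
      constructor
      · ext z
        rw [show ((2:ℕ):ℤ) = 2 from rfl, pow_two']
        show (x * x) * z = ((Lperm x)^(2:ℤ)) z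
        rw [zpow_two, Equiv.Perm.mul_apply]
        exact (LAP hW2 x z).symm
      · ext z
        rw [show ((2:ℕ):ℤ) = 2 from rfl, pow_two']
        show z * (x * x) = ((Rperm x)^(2:ℤ)) z
        rw [zpow_two, Equiv.Perm.mul_apply]
        exact (RAP hW1 x z).symm
  | (n+3) =>
      -- helper facts available from IH at 2 applied to x⁻¹
      have h2 := IH 2 (by omega) x⁻¹
      have hLm2 : Lperm (pow x (-2)) = (Lperm x)^(-2 : ℤ) := by
        rw [show ((-2):ℤ) = -(2:ℤ) from rfl, pow_neg']
        rw [show ((2):ℤ) = ((2:ℕ):ℤ) from rfl, h2.1, Lperm_inv, inv_zpow, ← zpow_neg]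
      have hRm2 : Rperm (pow x (-2)) = (Rperm x)^(-2 : ℤ) := by
        rw [show ((-2):ℤ) = -(2:ℤ) from rfl, pow_neg']
        rw [show ((2):ℤ) = ((2:ℕ):ℤ) from rfl, h2.2, Rperm_inv, inv_zpow, ← zpow_neg]
      have hLm1 : Lperm (pow x (-1)) = (Lperm x)^(-1 : ℤ) := by
        rw [show ((-1):ℤ) = -(1:ℤ) from rfl, pow_neg', pow_one', Lperm_inv, zpow_neg_one]
      have hRm1 : Rperm (pow x (-1)) = (Rperm x)^(-1 : ℤ) := by
        rw [show ((-1):ℤ) = -(1:ℤ) from rfl, pow_neg', pow_one', Rperm_inv, zpow_neg_one]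
      rcases Nat.even_or_odd n with ⟨a, ha⟩ | ⟨a, ha⟩
      · -- n = a + a, target N = n+3 = 2(a+2)-1 : odd case
        have hk := IH (a+2) (by omega) x
        have hk2 := IH a (by omega) x
        have hcast : ((a+2 : ℕ) : ℤ) = (a : ℤ) + 2 := by push_cast; ring
        have hcast2 : ((a+2 : ℕ) : ℤ) - 2 = ((a : ℕ) : ℤ) := by push_cast; ring
        have hLk : Lperm (pow x ((a:ℤ)+2)) = (Lperm x)^((a:ℤ)+2) := by
          rw [← hcast]; exact (IH (a+2) (by omega) x).1
        have hRk : Rperm (pow x ((a:ℤ)+2)) = (Rperm x)^((a:ℤ)+2) := by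
          rw [← hcast]; exact (IH (a+2) (by omega) x).2
        have hLk2 : Lperm (pow x ((a:ℤ)+2-2)) = (Lperm x)^((a:ℤ)+2-2) := by
          have : (a:ℤ)+2-2 = ((a:ℕ):ℤ) := by ring
          rw [this]; exact hk2.1
        have hRk2 : Rperm (pow x ((a:ℤ)+2-2)) = (Rperm x)^((a:ℤ)+2-2) := by
          have : (a:ℤ)+2-2 = ((a:ℕ):ℤ) := by ring
          rw [this]; exact hk2.2
        have hN : ((n+3 : ℕ) : ℤ) = 2*((a:ℤ)+2)-1 := by
          subst ha; push_cast; ring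
        rw [hN]
        exact ⟨Lodd hflex hW2 hLk hLk2, Rodd hflex hW1 hLk hRk hRk2⟩
      · -- n = 2a+1, target N = n+3 = 2(a+3)-2 : even case
        have hk := IH (a+3) (by omega) x
        have hcast : ((a+3 : ℕ) : ℤ) = (a : ℤ) + 3 := by push_cast; ring
        have hLk : Lperm (pow x ((a:ℤ)+3)) = (Lperm x)^((a:ℤ)+3) := by
          rw [← hcast]; exact hk.1
        have hRk : Rperm (pow x ((a:ℤ)+3)) = (Rperm x)^((a:ℤ)+3) := by
          rw [← hcast]; exact hk.2
        have hk4L : Lperm (pow x ((a:ℤ)+3-4)) = (Lperm x)^((a:ℤ)+3-4) := by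
          match a with
          | 0 => simpa using hLm1
          | (b+1) =>
              have := (IH b (by omega) x).1
              have hc : ((b:ℕ):ℤ) = ((b+1:ℕ):ℤ)+3-4 := by push_cast; ring
              rwa [hc] at this
        have hk4R : Rperm (pow x ((a:ℤ)+3-4)) = (Rperm x)^((a:ℤ)+3-4) := by
          match a with
          | 0 => simpa using hRm1
          | (b+1) =>
              have := (IH b (by omega) x).2
              have hc : ((b:ℕ):ℤ) = ((b+1:ℕ):ℤ)+3-4 := by push_cast; ring
              rwa [hc] at this
        have hN : ((n+3 : ℕ) : ℤ) = 2*((a:ℤ)+3)-2 := by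
          subst ha; push_cast; ring
        rw [hN]
        exact ⟨Leven hflex hW2 hLk hLm2 hRm2 hk4L,
               Reven hflex hW1 hLk hRk hLm2 hRm2 hk4R⟩

include hflex hW1 hW2 in
lemma paltZ (x : M) (n : ℤ) :
    Lperm (pow x n) = (Lperm x)^n ∧ Rperm (pow x n) = (Rperm x)^n := by
  rcases le_or_gt 0 n with h | h
  · obtain ⟨m, rfl⟩ := Int.eq_ofNat_of_zero_le h
    exact palt hflex hW1 hW2 m x
  · obtain ⟨m, hm⟩ : ∃ m : ℕ, n = -(m : ℤ) := by
      refine ⟨n.natAbs, ?_⟩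
      omega
    subst hm
    have h1 : pow x (-(m:ℤ)) = pow x⁻¹ (m:ℤ) := pow_neg' x m
    have h2 := palt hflex hW1 hW2 m x⁻¹
    constructor
    · rw [h1, h2.1, Lperm_inv, inv_zpow, ← zpow_neg]
    · rw [h1, h2.2, Rperm_inv, inv_zpow, ← zpow_neg]

end palt

section blockcalc
variable {M : Type*} [IPLoop M]
variable (hflex : ∀ x y : M, x * (y * x) = (x * y) * x)
variable (hW1 : ∀ x y z : M, (z * x) * (y * (x * y)) = (z * (x * (y * x))) * y)
variable (hW2 : ∀ x y z : M, (y * (x * y)) * (x * z) = y * ((x * (y * x)) * z))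

include hflex hW1 hW2

lemma LPa (x : M) (a : ℤ) (w : M) : ((Lperm x)^a) w = pow x a * w := by
  rw [← (paltZ hflex hW1 hW2 x a).1]; rfl

lemma RPa (x : M) (a : ℤ) (w : M) : ((Rperm x)^a) w = w * pow x a := by
  rw [← (paltZ hflex hW1 hW2 x a).2]; rfl

lemma mul_pp (x : M) (a b : ℤ) : pow x a * pow x b = pow x (a+b) := by
  rw [← LPa hflex hW1 hW2, FL]

lemma lmul_lmul (x : M) (a b : ℤ) (w : M) :
    pow x a * (pow x b * w) = pow x (a+b) * w := by
  rw [← LPa hflex hW1 hW2, ← LPa hflex hW1 hW2, ← LPa hflex hW1 hW2,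
    ← Equiv.Perm.mul_apply, ← zpow_add]

lemma rmul_rmul (x : M) (a b : ℤ) (w : M) :
    (w * pow x a) * pow x b = w * pow x (a+b) := by
  rw [← RPa hflex hW1 hW2, ← RPa hflex hW1 hW2, ← RPa hflex hW1 hW2,
    ← Equiv.Perm.mul_apply, ← zpow_add]
  rw [add_comm]

lemma lr_assoc (x : M) (i j : ℤ) (w : M) :
    (pow x i * w) * pow x j = pow x i * (w * pow x j) := by
  have hc : Commute (Lperm x) (Rperm x) := by
    unfold Commute SemiconjBy
    ext z
    show x * (z * x) = (x * z) * x
    exact hflex x z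
  have h := congrArg (fun f => f w) ((hc.zpow_zpow i j).eq)
  simp only [Equiv.Perm.mul_apply] at h
  rw [LPa hflex hW1 hW2, LPa hflex hW1 hW2, RPa hflex hW1 hW2, RPa hflex hW1 hW2] at h
  exact h.symm

lemma pow_zero_one (x : M) : pow x 0 = 1 := pow_zero' x

-- G0 : (x^i y^m)(y^{-m} x^j) = x^(i+j)
lemma G0 (x y : M) (i m j : ℤ) :
    (pow x i * pow y m) * (pow y (-m) * pow x j) = pow x (i+j) := by
  set u : M := pow x j * pow y m with hu
  have p1 : u * pow y (-m) = pow x j := by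
    rw [hu, rmul_rmul hflex hW1 hW2]
    simp [pow_zero']
  have p2 : u * (pow y (-m) * u) = pow x (j+j) * pow y m := by
    rw [hflex u (pow y (-m)), p1, hu, lmul_lmul hflex hW1 hW2]
  have key := hW1 u (pow y (-m)) (pow x (i-j))
  rw [p1, p2] at key
  -- key : (x^(i-j) * u) * (y^(-m) * x^j) = (x^(i-j) * (x^(j+j) * y^m)) * y^(-m)
  rw [hu, lmul_lmul hflex hW1 hW2, lmul_lmul hflex hW1 hW2] at key
  have e1 : i - j + j = i := by ring
  rw [e1] at key
  rw [key, rmul_rmul hflex hW1 hW2]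
  simp [pow_zero']

-- DIAG : (x^i y^n)(y^n x^j) = x^i (y^(2n) x^j)
lemma DIAG (x y : M) (i n j : ℤ) :
    (pow x i * pow y n) * (pow y n * pow x j) = pow x i * (pow y (n+n) * pow x j) := by
  set v : M := pow y n * pow x j with hv
  have p1 : v * pow x (-j) = pow y n := by
    rw [hv, rmul_rmul hflex hW1 hW2]
    simp [pow_zero']
  have p2 : v * (pow x (-j) * v) = pow y (n+n) * pow x j := by
    rw [hflex v (pow x (-j)), p1, hv, lmul_lmul hflex hW1 hW2]
  have key := hW1 (pow x (-j)) v (pow x (i+j))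
  rw [p2] at key
  have p3 : pow x (-j) * (v * pow x (-j)) = pow x (-j) * pow y n := by rw [p1]
  rw [p3] at key
  -- key : (x^(i+j) * x^(-j)) * (y^(n+n) * x^j) = (x^(i+j) * (x^(-j) * y^n)) * v
  rw [mul_pp hflex hW1 hW2, lmul_lmul hflex hW1 hW2] at key
  have e1 : i + j + -j = i := by ring
  rw [e1] at key
  rw [hv] at key
  exact key.symm

-- the statement family
def GP (x y : M) (i m n j : ℤ) : Prop :=
  (pow x i * pow y m) * (pow y n * pow x j) = pow x i * (pow y (m+n) * pow x j)

lemma Ga (x y : M) {i m n j : ℤ} (H : GP x y i m n j) :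
    (pow y (-m) * pow x (-i)) * (pow x i * (pow y (m+n) * pow x j)) =
      pow y n * pow x j := by
  have hA : (pow x i * pow y m) * (pow y (-m) * pow x (-i)) = 1 := by
    have := G0 hflex hW1 hW2 x y i m (-i)
    rw [show i + -i = 0 by ring, pow_zero'] at this
    exact this
  have hinv : pow y (-m) * pow x (-i) = (pow x i * pow y m)⁻¹ := by
    apply mul_left_cancel' (x := pow x i * pow y m)
    rw [hA, mul_inv_self]
  rw [hinv, ← H]
  exact IPLoop.inv_mul_cancel_left _ _

lemma Gb (x y : M) {i m n j : ℤ} (H : GP x y i m n j) :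
    (pow x i * (pow y (m+n) * pow x j)) * (pow x (-j) * pow y (-n)) =
      pow x i * pow y m := by
  have hB : (pow y n * pow x j) * (pow x (-j) * pow y (-n)) = 1 := by
    have := G0 hflex hW1 hW2 y x n j (-n)
    rw [show n + -n = 0 by ring, pow_zero'] at this
    exact this
  have hinv : pow x (-j) * pow y (-n) = (pow y n * pow x j)⁻¹ := by
    apply mul_left_cancel' (x := pow y n * pow x j)
    rw [hB, mul_inv_self]
  rw [hinv, ← H]
  exact IPLoop.mul_inv_cancel_right _ _

-- step rule from W2
lemma stepW2 (x y : M) (i j t s c : ℤ)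
    (P1 : GP x y i t (c-t) j) (P2 : GP x y i (2*t-s) (c+s-2*t) j)
    (P3 : GP x y i s (c+s-2*t) j) :
    GP x y i (2*s-t) (c-t) j := by
  have LL : ∀ (a : M) (p q : ℤ) (w : M), pow a p * (pow a q * w) = pow a (p+q) * w :=
    lmul_lmul hflex hW1 hW2
  have RR : ∀ (a : M) (p q : ℤ) (w : M), (w * pow a p) * pow a q = w * pow a (p+q) :=
    fun a p q w => rmul_rmul hflex hW1 hW2 a p q w
  set u : M := pow y (-t) * pow x (-i) with hu
  set v : M := pow x i * pow y s with hv
  set z : M := pow x i * (pow y c * pow x j) with hz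
  have huv : u * v = pow y (s-t) := by
    have := G0 hflex hW1 hW2 y x (-t) (-i) s
    rw [show -(-i) = i by ring] at this
    rw [hu, hv, this]
    congr 1 <;> ring
  have hV : v * (u * v) = pow x i * pow y (2*s-t) := by
    rw [huv, hv, RR]
    congr 2 <;> ring
  have hU : u * (v * u) = pow y (s-2*t) * pow x (-i) := by
    rw [hflex u v, huv, hu, LL]
    congr 2 <;> ring
  have hz1 : u * z = pow y (c-t) * pow x j := by
    have := Ga hflex hW1 hW2 x y P1
    rw [show t + (c-t) = c by ring] at this
    rw [hu, hz, this]
  have hz2 : (u * (v * u)) * z = pow y (c+s-2*t) * pow x j := by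
    have := Ga hflex hW1 hW2 x y P2
    rw [show (2*t-s) + (c+s-2*t) = c by ring, show -(2*t-s) = s-2*t by ring] at this
    rw [hU, hz, this]
  have key := hW2 u v z
  rw [hV, hz1, hz2, hv] at key
  have P3' := P3
  unfold GP at P3'
  rw [P3'] at key
  unfold GP
  rw [key]
  congr 2 <;> ring

-- step rule from W1
lemma stepW1 (x y : M) (i j t s c : ℤ)
    (P1 : GP x y i (c-t) t j) (P2 : GP x y i (c+s-2*t) (2*t-s) j)
    (P3 : GP x y i (c+s-2*t) s j) :
    GP x y i (c-t) (2*s-t) j := by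
  have LL : ∀ (a : M) (p q : ℤ) (w : M), pow a p * (pow a q * w) = pow a (p+q) * w :=
    lmul_lmul hflex hW1 hW2
  have RR : ∀ (a : M) (p q : ℤ) (w : M), (w * pow a p) * pow a q = w * pow a (p+q) :=
    fun a p q w => rmul_rmul hflex hW1 hW2 a p q w
  set u : M := pow x (-j) * pow y (-t) with hu
  set v : M := pow y s * pow x j with hv
  set z : M := pow x i * (pow y c * pow x j) with hz
  have hvu : v * u = pow y (s-t) := by
    have := G0 hflex hW1 hW2 y x s j (-t)
    rw [hv, hu, this]
    congr 1 <;> ring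
  have hV : v * (u * v) = pow y (2*s-t) * pow x j := by
    rw [hflex v u, hvu, hv, LL]
    congr 2 <;> ring
  have hU : u * (v * u) = pow x (-j) * pow y (s-2*t) := by
    rw [hvu, hu, RR]
    congr 2 <;> ring
  have hz1 : z * u = pow x i * pow y (c-t) := by
    have := Gb hflex hW1 hW2 x y P1
    rw [show (c-t) + t = c by ring] at this
    rw [hu, hz, this]
  have hz2 : z * (u * (v * u)) = pow x i * pow y (c+s-2*t) := by
    have := Gb hflex hW1 hW2 x y P2
    rw [show (c+s-2*t) + (2*t-s) = c by ring, show -(2*t-s) = s-2*t by ring] at this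
    rw [hU, hz, this]
  have key := hW1 u v z
  rw [hV, hz1, hz2, hv] at key
  have P3' := P3
  unfold GP at P3'
  rw [P3'] at key
  unfold GP
  rw [key]
  congr 2 <;> ring

-- universally quantified statement family
def PP (M : Type*) [IPLoop M] (m n : ℤ) : Prop :=
  ∀ (x y : M) (i j : ℤ), GP x y i m n j

omit hflex hW1 hW2 in
lemma GPcast {x y : M} {i j m m' n n' : ℤ} (h : GP x y i m n j)
    (hm : m = m') (hn : n = n') : GP x y i m' n' j := hm ▸ hn ▸ h

omit hflex hW1 hW2 in
lemma PPcast {m m' n n' : ℤ} (h : PP M m n)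
    (hm : m = m') (hn : n = n') : PP M m' n' := hm ▸ hn ▸ h

lemma P_m0 (m : ℤ) : PP M m 0 := by
  intro x y i j
  unfold GP
  rw [pow_zero', one_mul', add_zero]
  exact lr_assoc hflex hW1 hW2 x i j (pow y m)

lemma P_0n (n : ℤ) : PP M 0 n := by
  intro x y i j
  unfold GP
  rw [pow_zero', mul_one', zero_add]

lemma P_G0 (m : ℤ) : PP M m (-m) := by
  intro x y i j
  unfold GP
  rw [show m + -m = 0 by ring, pow_zero', one_mul', mul_pp hflex hW1 hW2]
  exact G0 hflex hW1 hW2 x y i m j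

lemma P_diag (n : ℤ) : PP M n n := by
  intro x y i j
  exact DIAG hflex hW1 hW2 x y i n j

omit hflex hW1 hW2 in
lemma P_neg {m n : ℤ} (h : PP M (-m) (-n)) : PP M m n := by
  intro x y i j
  have H := h x y⁻¹ i j
  unfold GP at H ⊢
  rw [pow_inv, pow_inv, pow_inv, neg_neg, neg_neg,
    show -(-m + -n) = m + n by ring] at H
  exact H

omit hflex hW1 hW2 in
lemma P_negc {m n m' n' : ℤ} (h : PP M m n) (hm : -m = m') (hn : -n = n') :
    PP M m' n' := PPcast (P_neg (PPcast h (neg_neg m).symm (neg_neg n).symm)) hm hn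

lemma stR {m n : ℤ} (h1 : PP M (m-1) (n+1)) (h2 : PP M (m-2) n)
    (h3 : PP M (m-3) (n+1)) : PP M m n := by
  intro x y i j
  have key := stepW2 hflex hW1 hW2 x y i j (m-2) (m-1) (n+m-2)
    (GPcast (h2 x y i j) rfl (by ring))
    (GPcast (h3 x y i j) (by ring) (by ring))
    (GPcast (h1 x y i j) rfl (by ring))
  exact GPcast key (by ring) (by ring)

lemma stL {m n : ℤ} (h1 : PP M (m+1) (n-1)) (h2 : PP M m (n-2))
    (h3 : PP M (m+1) (n-3)) : PP M m n := by
  intro x y i j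
  have key := stepW1 hflex hW1 hW2 x y i j (n-2) (n-1) (m+n-2)
    (GPcast (h2 x y i j) (by ring) rfl)
    (GPcast (h3 x y i j) (by ring) (by ring))
    (GPcast (h1 x y i j) (by ring) (by ring))
  exact GPcast key (by ring) (by ring)

lemma levStep (σ : ℤ) (H : ∀ m : ℤ, PP M m (σ - 2 - m)) :
    ∀ m : ℤ, PP M m (σ - m) := by
  have pos : ∀ K : ℕ, PP M K (σ - K) := by
    intro K
    induction K with
    | zero => exact PPcast (P_0n hflex hW1 hW2 σ) rfl (by push_cast; try ring)
    | succ K ih =>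
        apply stR hflex hW1 hW2
        · exact PPcast ih (by push_cast; try ring) (by push_cast; try ring)
        · exact PPcast (H ((K:ℤ)-1)) (by push_cast; try ring) (by push_cast; try ring)
        · exact PPcast (H ((K:ℤ)-2)) (by push_cast; try ring) (by push_cast; try ring)
  have neg : ∀ K : ℕ, PP M (-(K:ℤ)) (σ + K) := by
    intro K
    induction K with
    | zero => exact PPcast (P_0n hflex hW1 hW2 σ) rfl (by push_cast; try ring)
    | succ K ih =>
        apply stL hflex hW1 hW2
        · exact PPcast ih (by push_cast; try ring) (by push_cast; try ring)
        · exact PPcast (H (-(K:ℤ)-1)) (by push_cast; try ring) (by push_cast; try ring)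
        · exact PPcast (H (-(K:ℤ))) (by push_cast; try ring) (by push_cast; try ring)
  intro m
  obtain ⟨K, rfl | rfl⟩ := Int.eq_nat_or_neg m
  · exact pos K
  · exact PPcast (neg K) rfl (by ring)

lemma lev1 : ∀ m : ℤ, PP M m (1 - m) := by
  have T : ∀ K : ℕ, PP M K (1-(K:ℤ)) ∧ PP M (-(K:ℤ)) (1+K) := by
    intro K
    induction K using Nat.strong_induction_on with
    | _ K IH =>
    match K with
    | 0 =>
        refine ⟨PPcast (P_0n hflex hW1 hW2 1) (by push_cast; try ring) (by push_cast; try ring), ?_⟩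
        exact PPcast (P_0n hflex hW1 hW2 1) (by push_cast; try ring) (by push_cast; try ring)
    | 1 =>
        refine ⟨PPcast (P_m0 hflex hW1 hW2 1) (by push_cast; try ring) (by push_cast; try ring), ?_⟩
        apply stL hflex hW1 hW2
        · exact PPcast (P_0n hflex hW1 hW2 1) (by push_cast; try ring) (by push_cast; try ring)
        · exact PPcast (P_m0 hflex hW1 hW2 (-1)) (by push_cast; try ring) (by push_cast; try ring)
        · exact PPcast (P_0n hflex hW1 hW2 (-1)) (by push_cast; try ring) (by push_cast; try ring)
    | 2 =>
        have first : PP M ((2:ℕ):ℤ) (1-((2:ℕ):ℤ)) := by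
          apply stR hflex hW1 hW2
          · exact PPcast (P_m0 hflex hW1 hW2 1) (by push_cast; try ring) (by push_cast; try ring)
          · exact PPcast (P_0n hflex hW1 hW2 (-1)) (by push_cast; try ring) (by push_cast; try ring)
          · exact PPcast (P_m0 hflex hW1 hW2 (-1)) (by push_cast; try ring) (by push_cast; try ring)
        refine ⟨first, ?_⟩
        apply stL hflex hW1 hW2
        · exact PPcast ((IH 1 (by omega)).2) (by push_cast; try ring) (by push_cast; try ring)
        · exact P_negc first (by push_cast; try ring) (by push_cast; try ring)
        · exact PPcast (P_m0 hflex hW1 hW2 (-1)) (by push_cast; try ring) (by push_cast; try ring)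
    | (K+3) =>
        have first : PP M ((K+3:ℕ):ℤ) (1-((K+3:ℕ):ℤ)) := by
          apply stR hflex hW1 hW2
          · exact PPcast ((IH (K+2) (by omega)).1) (by push_cast; try ring) (by push_cast; try ring)
          · exact P_negc ((IH (K+1) (by omega)).2) (by push_cast; try ring) (by push_cast; try ring)
          · exact P_negc ((IH K (by omega)).2) (by push_cast; try ring) (by push_cast; try ring)
        refine ⟨first, ?_⟩
        apply stL hflex hW1 hW2
        · exact PPcast ((IH (K+2) (by omega)).2) (by push_cast; try ring) (by push_cast; try ring)
        · exact P_negc first (by push_cast; try ring) (by push_cast; try ring)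
        · exact P_negc ((IH (K+2) (by omega)).1) (by push_cast; try ring) (by push_cast; try ring)
  intro m
  obtain ⟨K, rfl | rfl⟩ := Int.eq_nat_or_neg m
  · exact (T K).1
  · exact PPcast ((T K).2) rfl (by ring)

lemma levAll : ∀ σ : ℕ, ∀ m : ℤ, PP M m ((σ:ℤ) - m) := by
  intro σ
  induction σ using Nat.strong_induction_on with
  | _ σ IH =>
  match σ with
  | 0 => intro m; exact PPcast (P_G0 hflex hW1 hW2 m) rfl (by push_cast; try ring)
  | 1 => intro m; exact PPcast (lev1 hflex hW1 hW2 m) rfl (by push_cast; try ring)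
  | (σ+2) =>
      intro m
      have H : ∀ m' : ℤ, PP M m' (((σ+2:ℕ):ℤ) - 2 - m') := by
        intro m'
        exact PPcast (IH σ (by omega) m') rfl (by push_cast; try ring)
      exact levStep hflex hW1 hW2 ((σ+2:ℕ):ℤ) H m

lemma Pall (m n : ℤ) : PP M m n := by
  rcases le_or_gt 0 (m+n) with h | h
  · obtain ⟨σ, hσ⟩ := Int.eq_ofNat_of_zero_le h
    exact PPcast (levAll hflex hW1 hW2 σ m) rfl (by omega)
  · apply P_neg
    have h' : (0:ℤ) ≤ (-m) + (-n) := by omega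
    obtain ⟨σ, hσ⟩ := Int.eq_ofNat_of_zero_le h'
    exact PPcast (levAll hflex hW1 hW2 σ (-m)) rfl (by omega)

end blockcalc
end Arif


/-- In an ARIF loop, `(xⁱ·yᵐ)·(yⁿ·xʲ) = xⁱ·(y^{m+n}·xʲ)` for all integers
`i, j, m, n`. -/
theorem arif_3assoc {M : Type*} [IPLoop M]
    (hflex : ∀ x y : M, x * (y * x) = (x * y) * x)
    (hW1 : ∀ x y z : M, (z * x) * (y * (x * y)) = (z * (x * (y * x))) * y)
    (hW2 : ∀ x y z : M, (y * (x * y)) * (x * z) = y * ((x * (y * x)) * z)) :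
    ∀ (x y : M) (i j m n : ℤ),
      (Loop.pow x i * Loop.pow y m) * (Loop.pow y n * Loop.pow x j) =
        Loop.pow x i * (Loop.pow y (m + n) * Loop.pow x j) := by
  intro x y i j m n
  exact Arif.Pall hflex hW1 hW2 m n x y i j
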